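/- arXiv:0908.1021 — 2 statements merged into one kernel-verified Lean document; each statement's English description precedes it below -/
import Mathlib

section
/- Let L₀, …, L_{d+1} be elements of a (possibly noncommutative) associative algebra and set L = ∑_{i=0}^{d+1} L_i. Then, truncating formal power series in t at order 2: the degree-≤2 part of (1/2)∏_{i=0}^{d+1}(I + tL_i + (t²/2)L_i²) + (1/2)∏_{i=0}^{d+1}(I + tL_{d+1−i} + (t²/2)L_{d+1−i}²) equals I + tL + (t²/2)L². (Here the first product is in increasing order of index and the second in decreasing order.) -/
open Polynomial

/-- Order-2 truncation of `exp(tL)` as a polynomial in the central variable `t`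
with coefficients in a noncommutative algebra. -/
noncomputable def expTrunc2 {A : Type*} [Ring A] [Algebra ℚ A] (L : A) : Polynomial A :=
  1 + Polynomial.C L * Polynomial.X + Polynomial.C ((1 / 2 : ℚ) • L ^ 2) * Polynomial.X ^ 2

section Aux

variable {A : Type*} [Ring A] [Algebra ℚ A]

lemma nv_coeff_mul_one (p q : Polynomial A) :
    (p * q).coeff 1 = p.coeff 0 * q.coeff 1 + p.coeff 1 * q.coeff 0 := by
  rw [coeff_mul, Finset.Nat.sum_antidiagonal_eq_sum_range_succ_mk]
  simp [Finset.sum_range_succ]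

lemma nv_coeff_mul_two (p q : Polynomial A) :
    (p * q).coeff 2 = p.coeff 0 * q.coeff 2 + p.coeff 1 * q.coeff 1 + p.coeff 2 * q.coeff 0 := by
  rw [coeff_mul, Finset.Nat.sum_antidiagonal_eq_sum_range_succ_mk]
  simp [Finset.sum_range_succ, add_assoc]

lemma expTrunc2_coeff0 (L : A) : (expTrunc2 L).coeff 0 = 1 := by
  simp [expTrunc2, coeff_one]

lemma expTrunc2_coeff1 (L : A) : (expTrunc2 L).coeff 1 = L := by
  simp [expTrunc2, coeff_one]

lemma expTrunc2_coeff2 (L : A) : (expTrunc2 L).coeff 2 = (1/2 : ℚ) • L ^ 2 := by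
  simp [expTrunc2, coeff_one]

lemma nv_prod_coeff0 (l : List A) : ((l.map expTrunc2).prod).coeff 0 = 1 := by
  induction l with
  | nil => simp
  | cons a l ih => simp [Polynomial.mul_coeff_zero, expTrunc2_coeff0, ih]

lemma nv_prod_coeff1 (l : List A) : ((l.map expTrunc2).prod).coeff 1 = l.sum := by
  induction l with
  | nil => simp [Polynomial.coeff_one]
  | cons a l ih =>
      rw [List.map_cons, List.prod_cons, nv_coeff_mul_one, expTrunc2_coeff0, expTrunc2_coeff1,
        ih, nv_prod_coeff0, List.sum_cons, one_mul, mul_one, add_comm]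

lemma nv_prod_coeff2_symm (l : List A) :
    ((l.map expTrunc2).prod).coeff 2 + ((l.reverse.map expTrunc2).prod).coeff 2
      = l.sum ^ 2 := by
  induction l with
  | nil => simp [Polynomial.coeff_one]
  | cons a l ih =>
      have h1 : (((a :: l).map expTrunc2).prod).coeff 2
          = (1/2 : ℚ) • a ^ 2 + a * l.sum + ((l.map expTrunc2).prod).coeff 2 := by
        simp only [List.map_cons, List.prod_cons]
        rw [nv_coeff_mul_two, expTrunc2_coeff0, expTrunc2_coeff1, expTrunc2_coeff2,
          nv_prod_coeff0, nv_prod_coeff1]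
        simp only [one_mul, mul_one]; abel
      have h2 : (((a :: l).reverse.map expTrunc2).prod).coeff 2
          = (1/2 : ℚ) • a ^ 2 + l.sum * a + ((l.reverse.map expTrunc2).prod).coeff 2 := by
        simp only [List.reverse_cons, List.map_append, List.prod_append, List.map_singleton,
          List.prod_singleton]
        rw [nv_coeff_mul_two, expTrunc2_coeff0, expTrunc2_coeff1, expTrunc2_coeff2,
          nv_prod_coeff0, nv_prod_coeff1, List.sum_reverse]
        simp only [one_mul, mul_one]
      have hsq : ((a :: l).sum) ^ 2 = a ^ 2 + a * l.sum + l.sum * a + l.sum ^ 2 := by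
        rw [List.sum_cons]; noncomm_ring
      have ha : (1/2 : ℚ) • a ^ 2 + (1/2 : ℚ) • a ^ 2 = a ^ 2 := by
        rw [← add_smul]; norm_num
      rw [h1, h2, hsq, ← ih]
      rw [show ((1/2 : ℚ) • a ^ 2 + a * l.sum + ((l.map expTrunc2).prod).coeff 2)
          + ((1/2 : ℚ) • a ^ 2 + l.sum * a + ((l.reverse.map expTrunc2).prod).coeff 2)
          = ((1/2 : ℚ) • a ^ 2 + (1/2 : ℚ) • a ^ 2) + a * l.sum + l.sum * a
            + (((l.map expTrunc2).prod).coeff 2 + ((l.reverse.map expTrunc2).prod).coeff 2)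
          from by abel, ha]

end Aux

/-- The symmetrized Ninomiya–Victoir (b) composition matches the semigroup
expansion `I + tL + (t²/2)L²` up to order 2 in `t`. -/
theorem ninomiya_victoir_b_second_order {A : Type*} [Ring A] [Algebra ℚ A]
    (d : ℕ) (L : Fin (d + 2) → A) :
    ∀ j ≤ 2,
      ((1 / 2 : ℚ) • (((List.finRange (d + 2)).map fun i => expTrunc2 (L i)).prod)
        + (1 / 2 : ℚ) • (((List.finRange (d + 2)).reverse.map fun i => expTrunc2 (L i)).prod)).coeff j
      = (expTrunc2 (∑ i, L i)).coeff j := by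
  set l : List A := (List.finRange (d + 2)).map L with hl
  have hmap : ((List.finRange (d + 2)).map fun i => expTrunc2 (L i)) = l.map expTrunc2 := by
    simp [hl, List.map_map, Function.comp]
  have hmapr : ((List.finRange (d + 2)).reverse.map fun i => expTrunc2 (L i))
      = l.reverse.map expTrunc2 := by
    simp [hl, List.map_map, Function.comp, List.map_reverse]
  have hsum : l.sum = ∑ i, L i := by
    rw [Fin.sum_univ_def, hl]
  intro j hj
  interval_cases j
  · rw [coeff_add, coeff_smul, coeff_smul, hmap, hmapr, nv_prod_coeff0, nv_prod_coeff0,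
      expTrunc2_coeff0, ← add_smul]
    norm_num
  · rw [coeff_add, coeff_smul, coeff_smul, hmap, hmapr, nv_prod_coeff1, nv_prod_coeff1,
      List.sum_reverse, hsum, expTrunc2_coeff1, ← add_smul]
    norm_num
  · rw [coeff_add, coeff_smul, coeff_smul, hmap, hmapr, expTrunc2_coeff2, ← hsum,
      show (1/2 : ℚ) • ((l.map expTrunc2).prod).coeff 2
          + (1/2 : ℚ) • ((l.reverse.map expTrunc2).prod).coeff 2
        = (1/2 : ℚ) • (((l.map expTrunc2).prod).coeff 2
          + ((l.reverse.map expTrunc2).prod).coeff 2) from (smul_add _ _ _).symm,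
      nv_prod_coeff2_symm]
end

section
/- Let ν be a Lévy measure on ℝ^d \ {0}, Σ_ε = ∫_{|y| ≤ ε} y y* dν the small-jump covariance matrix, h Lipschitz with linear growth, and f ∈ C³ with |D³f(z)| ≤ M(1 + |z|^p). Then |∫_{|y| ≤ ε}(f(x + h(x)y) − f(x) − ∇f(x)h(x)y) dν(y) − (1/2)∑_{k,l} ∂_{kl} f(x) (h(x) Σ_ε h(x)*)_{kl}| ≤ C M (1 + |x|^{p+3}) ∫_{|y| ≤ ε} |y|³ dν(y). -/
open MeasureTheory


lemma one_add_pow_le_aux {a : ℝ} (ha : 0 ≤ a) (n : ℕ) : (1 + a) ^ n ≤ 2 ^ n * (1 + a ^ n) := by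
  rcases le_total a 1 with h | h
  · calc (1 + a) ^ n ≤ 2 ^ n := by
          apply pow_le_pow_left₀ (by linarith) (by linarith)
      _ ≤ 2 ^ n * (1 + a ^ n) := by
          nlinarith [pow_pos (show (0:ℝ) < 2 by norm_num) n, pow_nonneg ha n]
  · calc (1 + a) ^ n ≤ (2 * a) ^ n := by
          apply pow_le_pow_left₀ (by linarith) (by linarith)
      _ = 2 ^ n * a ^ n := mul_pow 2 a n
      _ ≤ 2 ^ n * (1 + a ^ n) := by
          nlinarith [pow_pos (show (0:ℝ) < 2 by norm_num) n, pow_nonneg ha n]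


lemma one_add_pow_le_aux' {a : ℝ} (ha : 0 ≤ a) (n : ℕ) : (1 + a) ^ n ≤ 2 ^ n * (1 + a ^ n) := by
  rcases le_total a 1 with h | h
  · calc (1 + a) ^ n ≤ 2 ^ n := by
          apply pow_le_pow_left₀ (by linarith) (by linarith)
      _ ≤ 2 ^ n * (1 + a ^ n) := by
          nlinarith [pow_pos (show (0:ℝ) < 2 by norm_num) n, pow_nonneg ha n]
  · calc (1 + a) ^ n ≤ (2 * a) ^ n := by
          apply pow_le_pow_left₀ (by linarith) (by linarith)
      _ = 2 ^ n * a ^ n := mul_pow 2 a n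
      _ ≤ 2 ^ n * (1 + a ^ n) := by
          nlinarith [pow_pos (show (0:ℝ) < 2 by norm_num) n, pow_nonneg ha n]

lemma const_bound_aux {D M a : ℝ} (hD : 0 ≤ D) (hM : 0 ≤ M) (ha : 0 ≤ a) (p : ℕ) :
    M * (1 + (a + D * (1 + a)) ^ p) * (D * (1 + a)) ^ 3
      ≤ (2 ^ (p + 4) * (1 + D) ^ (p + 3)) * M * (1 + a ^ (p + 3)) := by
  set Q : ℝ := (1 + D) * (1 + a) with hQ_def
  have hQ1 : 1 ≤ Q := by nlinarith
  have hQ0 : 0 ≤ Q := by linarith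
  have hRQ : a + D * (1 + a) ≤ Q := by rw [hQ_def]; nlinarith
  have hcQ : D * (1 + a) ≤ Q := by rw [hQ_def]; nlinarith
  have h1 : 1 + (a + D * (1 + a)) ^ p ≤ 2 * Q ^ p := by
    have hp1 : (a + D * (1 + a)) ^ p ≤ Q ^ p := pow_le_pow_left₀ (by positivity) hRQ p
    have hp2 : (1:ℝ) ≤ Q ^ p := one_le_pow₀ hQ1
    linarith
  have h2 : (D * (1 + a)) ^ 3 ≤ Q ^ 3 := pow_le_pow_left₀ (by positivity) hcQ 3
  have h3 : M * (1 + (a + D * (1 + a)) ^ p) * (D * (1 + a)) ^ 3 ≤ M * (2 * Q ^ p) * Q ^ 3 := by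
    have hKle : M * (1 + (a + D * (1 + a)) ^ p) ≤ M * (2 * Q ^ p) :=
      mul_le_mul_of_nonneg_left h1 hM
    have t1 : M * (1 + (a + D * (1 + a)) ^ p) * (D * (1 + a)) ^ 3
        ≤ M * (2 * Q ^ p) * (D * (1 + a)) ^ 3 :=
      mul_le_mul_of_nonneg_right hKle (by positivity)
    have t2 : M * (2 * Q ^ p) * (D * (1 + a)) ^ 3 ≤ M * (2 * Q ^ p) * Q ^ 3 :=
      mul_le_mul_of_nonneg_left h2 (by positivity)
    linarith
  have h4 : M * (2 * Q ^ p) * Q ^ 3 = 2 * M * Q ^ (p + 3) := by rw [pow_add]; ring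
  have h5 : Q ^ (p + 3) ≤ (1 + D) ^ (p + 3) * (2 ^ (p + 3) * (1 + a ^ (p + 3))) := by
    rw [hQ_def, mul_pow]
    exact mul_le_mul_of_nonneg_left (one_add_pow_le_aux' ha (p + 3)) (by positivity)
  calc M * (1 + (a + D * (1 + a)) ^ p) * (D * (1 + a)) ^ 3 ≤ 2 * M * Q ^ (p + 3) := by
        rw [← h4]; exact h3
    _ ≤ 2 * M * ((1 + D) ^ (p + 3) * (2 ^ (p + 3) * (1 + a ^ (p + 3)))) :=
        mul_le_mul_of_nonneg_left h5 (by positivity)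
    _ = (2 ^ (p + 4) * (1 + D) ^ (p + 3)) * M * (1 + a ^ (p + 3)) := by
        rw [pow_succ]; ring

lemma taylor2_bound {E : Type*} [NormedAddCommGroup E] [NormedSpace ℝ E]
    (f : E → ℝ) (hf : ContDiff ℝ 3 f) (x v : E) (K : ℝ)
    (hK : ∀ t ∈ Set.Icc (0:ℝ) 1, ‖iteratedFDeriv ℝ 3 f (x + t • v)‖ ≤ K) :
    |f (x + v) - f x - fderiv ℝ f x v - (1/2) * fderiv ℝ (fderiv ℝ f) x v v|
      ≤ K * ‖v‖ ^ 3 := by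
  letI : Norm (E →L[ℝ] E →L[ℝ] E →L[ℝ] ℝ) :=
    @ContinuousLinearMap.hasOpNorm ℝ ℝ E (E →L[ℝ] E →L[ℝ] ℝ) _ _ _ _ _ _ (RingHom.id ℝ)
  have hfd : Differentiable ℝ f := hf.differentiable (by norm_num)
  have hfd1 : Differentiable ℝ (fderiv ℝ f) :=
    (hf.fderiv_right (m := 2) (by norm_num)).differentiable (by norm_num)
  have hfd2 : Differentiable ℝ (fderiv ℝ (fderiv ℝ f)) :=
    ((hf.fderiv_right (m := 2) (by norm_num)).fderiv_right (m := 1)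
      (by norm_num)).differentiable (by norm_num)
  set c : ℝ → E := fun t => x + t • v with hc_def
  have hc : ∀ t : ℝ, HasDerivAt c v t := by
    intro t
    have : HasDerivAt (fun t : ℝ => t • v) ((1:ℝ) • v) t := (hasDerivAt_id t).smul_const v
    simpa [hc_def] using this.const_add x
  set F₁ : ℝ → ℝ := fun t => fderiv ℝ f (c t) v with hF₁_def
  set F₂ : ℝ → ℝ := fun t => fderiv ℝ (fderiv ℝ f) (c t) v v with hF₂_def
  set F₃ : ℝ → ℝ := fun t => fderiv ℝ (fderiv ℝ (fderiv ℝ f)) (c t) v v v with hF₃_def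
  have hF : ∀ t : ℝ, HasDerivAt (fun s => f (c s)) (F₁ t) t := fun t =>
    (hfd (c t)).hasFDerivAt.comp_hasDerivAt t (hc t)
  have hF₁ : ∀ t : ℝ, HasDerivAt F₁ (F₂ t) t := by
    intro t
    have h1 : HasDerivAt (fun s => fderiv ℝ f (c s)) (fderiv ℝ (fderiv ℝ f) (c t) v) t :=
      (hfd1 (c t)).hasFDerivAt.comp_hasDerivAt t (hc t)
    simpa using h1.clm_apply (hasDerivAt_const t v)
  have hF₂ : ∀ t : ℝ, HasDerivAt F₂ (F₃ t) t := by
    intro t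
    have h1 : HasDerivAt (fun s => fderiv ℝ (fderiv ℝ f) (c s))
        (fderiv ℝ (fderiv ℝ (fderiv ℝ f)) (c t) v) t :=
      HasFDerivAt.comp_hasDerivAt (l := fderiv ℝ (fderiv ℝ f)) t (hfd2 (c t)).hasFDerivAt (hc t)
    have h2 := h1.clm_apply (hasDerivAt_const t v)
    simpa using h2.clm_apply (hasDerivAt_const t v)
  have hnorm3 : ∀ z : E, ‖fderiv ℝ (fderiv ℝ (fderiv ℝ f)) z‖ = ‖iteratedFDeriv ℝ 3 f z‖ := by
    intro z
    calc ‖fderiv ℝ (fderiv ℝ (fderiv ℝ f)) z‖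
        = ‖iteratedFDeriv ℝ 1 (fderiv ℝ (fderiv ℝ f)) z‖ := by
          rw [norm_iteratedFDeriv_one]
      _ = ‖iteratedFDeriv ℝ 2 (fderiv ℝ f) z‖ := norm_iteratedFDeriv_fderiv
      _ = ‖iteratedFDeriv ℝ 3 f z‖ := norm_iteratedFDeriv_fderiv
  have hKnn : 0 ≤ K := le_trans (norm_nonneg _) (hK 0 ⟨le_refl _, zero_le_one⟩)
  set C : ℝ := K * ‖v‖ ^ 3 with hC_def
  have hCnn : 0 ≤ C := by positivity
  have hbound3 : ∀ t ∈ Set.Icc (0:ℝ) 1, ‖F₃ t‖ ≤ C := by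
    intro t ht
    have h0 : ‖F₃ t‖ ≤ ‖fderiv ℝ (fderiv ℝ (fderiv ℝ f)) (c t)‖ * ‖v‖ * ‖v‖ * ‖v‖ := by
      calc ‖F₃ t‖ ≤ ‖fderiv ℝ (fderiv ℝ (fderiv ℝ f)) (c t) v v‖ * ‖v‖ :=
            ContinuousLinearMap.le_opNorm _ v
        _ ≤ ‖fderiv ℝ (fderiv ℝ (fderiv ℝ f)) (c t) v‖ * ‖v‖ * ‖v‖ :=
            mul_le_mul_of_nonneg_right (ContinuousLinearMap.le_opNorm _ v) (norm_nonneg v)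
        _ ≤ ‖fderiv ℝ (fderiv ℝ (fderiv ℝ f)) (c t)‖ * ‖v‖ * ‖v‖ * ‖v‖ :=
            mul_le_mul_of_nonneg_right (mul_le_mul_of_nonneg_right
              (ContinuousLinearMap.le_opNorm (fderiv ℝ (fderiv ℝ (fderiv ℝ f)) (c t)) v)
              (norm_nonneg v)) (norm_nonneg v)
    have h1 : ‖fderiv ℝ (fderiv ℝ (fderiv ℝ f)) (c t)‖ ≤ K := by
      rw [hnorm3]; exact hK t ht
    calc ‖F₃ t‖ ≤ ‖fderiv ℝ (fderiv ℝ (fderiv ℝ f)) (c t)‖ * ‖v‖ * ‖v‖ * ‖v‖ := h0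
      _ ≤ K * ‖v‖ * ‖v‖ * ‖v‖ :=
          mul_le_mul_of_nonneg_right (mul_le_mul_of_nonneg_right
            (mul_le_mul_of_nonneg_right h1 (norm_nonneg v)) (norm_nonneg v)) (norm_nonneg v)
      _ = C := by rw [hC_def]; ring
  -- step 1 : |F₂ t - F₂ 0| ≤ C on [0,1]
  have step1 : ∀ t ∈ Set.Icc (0:ℝ) 1, ‖F₂ t - F₂ 0‖ ≤ C := by
    intro t ht
    have := (convex_Icc (0:ℝ) 1).norm_image_sub_le_of_norm_hasDerivWithin_le
      (f := F₂) (f' := F₃) (fun s hs => (hF₂ s).hasDerivWithinAt) hbound3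
      (⟨le_refl _, zero_le_one⟩ : (0:ℝ) ∈ Set.Icc (0:ℝ) 1) ht
    calc ‖F₂ t - F₂ 0‖ ≤ C * ‖t - 0‖ := this
      _ ≤ C * 1 := by
          apply mul_le_mul_of_nonneg_left _ hCnn
          rw [sub_zero, Real.norm_eq_abs, abs_of_nonneg ht.1]; exact ht.2
      _ = C := mul_one C
  -- step 2 : |F₁ t - F₁ 0 - t * F₂ 0| ≤ C on [0,1]
  have step2 : ∀ t ∈ Set.Icc (0:ℝ) 1, ‖F₁ t - t * F₂ 0 - F₁ 0‖ ≤ C := by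
    intro t ht
    have hH : ∀ s ∈ Set.Icc (0:ℝ) 1, HasDerivWithinAt (fun u => F₁ u - u * F₂ 0)
        (F₂ s - F₂ 0) (Set.Icc (0:ℝ) 1) s := by
      intro s _
      have : HasDerivAt (fun u => F₁ u - u * F₂ 0) (F₂ s - 1 * F₂ 0) s :=
        (hF₁ s).sub ((hasDerivAt_id s).mul_const (F₂ 0))
      simpa using this.hasDerivWithinAt
    have := (convex_Icc (0:ℝ) 1).norm_image_sub_le_of_norm_hasDerivWithin_le
      hH step1 (⟨le_refl _, zero_le_one⟩ : (0:ℝ) ∈ Set.Icc (0:ℝ) 1) ht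
    have h2 : ‖F₁ t - t * F₂ 0 - (F₁ 0 - 0 * F₂ 0)‖ ≤ C * ‖t - 0‖ := this
    calc ‖F₁ t - t * F₂ 0 - F₁ 0‖ = ‖F₁ t - t * F₂ 0 - (F₁ 0 - 0 * F₂ 0)‖ := by ring_nf
      _ ≤ C * ‖t - 0‖ := h2
      _ ≤ C := by
          rw [sub_zero, Real.norm_eq_abs, abs_of_nonneg ht.1]
          nlinarith [ht.2]
  -- step 3 : final MVT on G
  set G : ℝ → ℝ := fun t => f (c t) - t * F₁ 0 - t ^ 2 * (F₂ 0 / 2) with hG_def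
  have hG : ∀ s ∈ Set.Icc (0:ℝ) 1, HasDerivWithinAt G (F₁ s - s * F₂ 0 - F₁ 0) (Set.Icc (0:ℝ) 1) s := by
    intro s _
    have h1 : HasDerivAt G (F₁ s - 1 * F₁ 0 - 2 * s ^ 1 * (F₂ 0 / 2)) s :=
      ((hF s).sub ((hasDerivAt_id s).mul_const (F₁ 0))).sub
        ((hasDerivAt_pow 2 s).mul_const (F₂ 0 / 2))
    have h2 : HasDerivAt G (F₁ s - s * F₂ 0 - F₁ 0) s := by
      convert h1 using 1; ring
    exact h2.hasDerivWithinAt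
  have final := (convex_Icc (0:ℝ) 1).norm_image_sub_le_of_norm_hasDerivWithin_le
    hG step2 (⟨le_refl _, zero_le_one⟩ : (0:ℝ) ∈ Set.Icc (0:ℝ) 1)
    (⟨zero_le_one, le_refl _⟩ : (1:ℝ) ∈ Set.Icc (0:ℝ) 1)
  have hc1 : c 1 = x + v := by simp [hc_def]
  have hc0 : c 0 = x := by simp [hc_def]
  have hG1 : G 1 - G 0 = f (x + v) - f x - F₁ 0 - (1/2) * F₂ 0 := by
    simp [hG_def, hc1, hc0]; ring
  have hF₁0 : F₁ 0 = fderiv ℝ f x v := by rw [hF₁_def]; simp [hc0]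
  have hF₂0 : F₂ 0 = fderiv ℝ (fderiv ℝ f) x v v := by rw [hF₂_def]; simp [hc0]
  have : ‖G 1 - G 0‖ ≤ C * ‖(1:ℝ) - 0‖ := final
  rw [hG1, hF₁0, hF₂0] at this
  simpa [Real.norm_eq_abs, hC_def] using this

set_option maxHeartbeats 1000000 in
/-- Third-order Taylor bound behind the Asmussen–Rosiński Gaussian substitution of
small jumps: replacing the small-jump integral by the second-order term
`(1/2)∑_{k,l} ∂_{kl}f(x) (h(x) Σ_ε h(x)*)_{kl}` produces an error bounded by
`C M (1+‖x‖^{p+3}) ∫_{‖y‖≤ε} ‖y‖³ dν`. -/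
theorem asmussen_rosinski_third_order_bound (N d : ℕ) (Ch : ℝ) (hCh : 0 < Ch) (p : ℕ) :
    ∃ C : ℝ, 0 < C ∧
      ∀ (ν : Measure (Fin d → ℝ))
        (_hLevy : ∫⁻ y, ENNReal.ofReal (min 1 (‖y‖ ^ 2)) ∂ν ≠ ⊤)
        (h : (Fin N → ℝ) → Matrix (Fin N) (Fin d) ℝ)
        (Kh : NNReal) (_hLip : ∀ k l, LipschitzWith Kh (fun x => h x k l))
        (_hgrowth : ∀ x k l, |h x k l| ≤ Ch * (1 + ‖x‖))
        (f : (Fin N → ℝ) → ℝ) (_hf : ContDiff ℝ 3 f)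
        (M : ℝ) (_hM : 0 ≤ M)
        (_hD3 : ∀ z, ‖iteratedFDeriv ℝ 3 f z‖ ≤ M * (1 + ‖z‖ ^ p))
        (x : Fin N → ℝ) (ε : ℝ), ε ∈ Set.Ioc (0:ℝ) 1 →
        |(∫ y in {y : Fin d → ℝ | ‖y‖ ≤ ε},
              (f (x + (h x).mulVec y) - f x - fderiv ℝ f x ((h x).mulVec y)) ∂ν)
          - (1 / 2) * ∑ k : Fin N, ∑ l : Fin N,
              (fderiv ℝ (fun z => fderiv ℝ f z (Pi.single l 1)) x (Pi.single k 1))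
                * ((h x * (Matrix.of fun i j : Fin d =>
                      ∫ y in {y : Fin d → ℝ | ‖y‖ ≤ ε}, y i * y j ∂ν) * (h x).transpose) k l)|
          ≤ C * M * (1 + ‖x‖ ^ (p + 3))
              * ∫ y in {y : Fin d → ℝ | ‖y‖ ≤ ε}, ‖y‖ ^ 3 ∂ν := by
  refine ⟨2 ^ (p + 4) * (1 + d * Ch) ^ (p + 3), by positivity, ?_⟩
  intro ν hLevy h Kh hLip hgrowth f hf M hM hD3 x ε hε
  obtain ⟨hε0, hε1⟩ := hε
  set S : Set (Fin d → ℝ) := {y | ‖y‖ ≤ ε} with hS_def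
  have hSmeas : MeasurableSet S := measurableSet_le measurable_norm measurable_const
  set μ : Measure (Fin d → ℝ) := ν.restrict S with hμ_def
  have hmemS : ∀ᵐ y ∂μ, y ∈ S := ae_restrict_mem hSmeas
  -- basic integrability
  have hμ2 : Integrable (fun y => ‖y‖ ^ 2) μ := by
    refine ⟨(continuous_norm.pow 2).aestronglyMeasurable, ?_⟩
    rw [hasFiniteIntegral_iff_norm]
    have hle : ∫⁻ y, ENNReal.ofReal ‖‖y‖ ^ 2‖ ∂μ
        ≤ ∫⁻ y, ENNReal.ofReal (min 1 (‖y‖ ^ 2)) ∂ν := by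
      refine le_trans (lintegral_mono_ae ?_) (lintegral_mono' Measure.restrict_le_self le_rfl)
      filter_upwards [hmemS] with y hy
      have hy1 : ‖y‖ ≤ 1 := le_trans hy hε1
      have : min 1 (‖y‖ ^ 2) = ‖y‖ ^ 2 := by
        rw [min_eq_right]
        nlinarith [norm_nonneg y]
      rw [this]
      apply ENNReal.ofReal_le_ofReal
      rw [Real.norm_of_nonneg (by positivity)]
    exact lt_of_le_of_lt hle (lt_top_iff_ne_top.mpr hLevy)
  have hcont_coord : ∀ i : Fin d, Continuous fun y : Fin d → ℝ => y i := fun i =>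
    continuous_apply i
  have hij : ∀ i j : Fin d, Integrable (fun y => y i * y j) μ := by
    intro i j
    refine hμ2.mono' (((hcont_coord i).mul (hcont_coord j)).aestronglyMeasurable) ?_
    filter_upwards with y
    rw [Real.norm_eq_abs, abs_mul]
    calc |y i| * |y j| ≤ ‖y‖ * ‖y‖ := by
          have h1 : |y i| ≤ ‖y‖ := by
            simpa [Real.norm_eq_abs] using norm_le_pi_norm y i
          have h2 : |y j| ≤ ‖y‖ := by
            simpa [Real.norm_eq_abs] using norm_le_pi_norm y j
          exact mul_le_mul h1 h2 (abs_nonneg _) (norm_nonneg _)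
      _ = ‖y‖ ^ 2 := (sq ‖y‖).symm
  have hy3 : Integrable (fun y => ‖y‖ ^ 3) μ := by
    refine hμ2.mono' ((continuous_norm.pow 3).aestronglyMeasurable) ?_
    filter_upwards [hmemS] with y hy
    rw [Real.norm_eq_abs, abs_of_nonneg (by positivity)]
    exact pow_le_pow_of_le_one (norm_nonneg y) (le_trans hy hε1) (by norm_num)
  -- the linear map v
  set v : (Fin d → ℝ) → (Fin N → ℝ) := fun y => (h x).mulVec y with hv_def
  have hvcont : Continuous v := by
    have : Continuous fun y : Fin d → ℝ => (h x).mulVecLin y :=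
      (h x).mulVecLin.continuous_of_finiteDimensional
    simpa [hv_def, Matrix.mulVecLin_apply] using this
  set c : ℝ := d * Ch * (1 + ‖x‖) with hc_def
  have hc_nn : 0 ≤ c := by positivity
  have hvle : ∀ y, ‖v y‖ ≤ c * ‖y‖ := by
    intro y
    rw [pi_norm_le_iff_of_nonneg (by positivity)]
    intro k
    rw [Real.norm_eq_abs]
    calc |v y k| = |∑ l, h x k l * y l| := by
          simp [hv_def, Matrix.mulVec, dotProduct]
      _ ≤ ∑ l, |h x k l * y l| := Finset.abs_sum_le_sum_abs _ _
      _ ≤ ∑ _l : Fin d, Ch * (1 + ‖x‖) * ‖y‖ := by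
          refine Finset.sum_le_sum fun l _ => ?_
          rw [abs_mul]
          refine mul_le_mul (hgrowth x k l) ?_ (abs_nonneg _) (by positivity)
          simpa [Real.norm_eq_abs] using norm_le_pi_norm y l
      _ = c * ‖y‖ := by
          rw [Finset.sum_const, Finset.card_univ, Fintype.card_fin, nsmul_eq_mul, hc_def]
          ring
  -- second derivative as a bilinear map
  set A : (Fin N → ℝ) →L[ℝ] (Fin N → ℝ) →L[ℝ] ℝ := fderiv ℝ (fderiv ℝ f) x with hA_def
  have hfd : Differentiable ℝ f := hf.differentiable (by norm_num)
  have hfd1 : Differentiable ℝ (fderiv ℝ f) :=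
    (hf.fderiv_right (m := 2) (by norm_num)).differentiable (by norm_num)
  have hBkl : ∀ k l : Fin N,
      fderiv ℝ (fun z => fderiv ℝ f z (Pi.single l 1)) x (Pi.single k 1)
        = A (Pi.single k 1) (Pi.single l 1) := by
    intro k l
    have h0 : HasFDerivAt (ContinuousLinearMap.apply ℝ ℝ (Pi.single l (1:ℝ)))
        (ContinuousLinearMap.apply ℝ ℝ (Pi.single l (1:ℝ))) (fderiv ℝ f x) :=
      ContinuousLinearMap.hasFDerivAt _
    have h1 := h0.comp x (hfd1 x).hasFDerivAt
    have h2 : HasFDerivAt (fun z => fderiv ℝ f z (Pi.single l 1))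
        ((ContinuousLinearMap.apply ℝ ℝ (Pi.single l (1:ℝ))).comp A) x := h1
    rw [h2.fderiv]
    rfl
  have hw_expand : ∀ w : Fin N → ℝ, w = ∑ k, w k • (Pi.single k 1 : Fin N → ℝ) := by
    intro w
    funext j
    rw [Finset.sum_apply]
    simp [Pi.single_apply]
  have hA_expand : ∀ w : Fin N → ℝ,
      A w w = ∑ k, ∑ l, (w k * w l) * A (Pi.single k 1) (Pi.single l 1) := by
    intro w
    conv_lhs => rw [hw_expand w]
    simp only [map_sum, _root_.map_smul, ContinuousLinearMap.sum_apply,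
      ContinuousLinearMap.smul_apply, smul_eq_mul, Finset.mul_sum]
    rw [Finset.sum_comm]
    refine Finset.sum_congr rfl fun k _ => Finset.sum_congr rfl fun l _ => by ring
  -- the integrands
  set Φ : (Fin d → ℝ) → ℝ := fun y => f (x + v y) - f x - fderiv ℝ f x (v y) with hΦ_def
  set G : (Fin d → ℝ) → ℝ := fun y => (1/2) * A (v y) (v y) with hG_def
  set K : ℝ := M * (1 + (‖x‖ + c) ^ p) with hK_def
  have hK_nn : 0 ≤ K := by positivity
  -- pointwise Taylor bound
  have hptw : ∀ y ∈ S, |Φ y - G y| ≤ K * c ^ 3 * ‖y‖ ^ 3 := by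
    intro y hy
    have hvy : ‖v y‖ ≤ c * ‖y‖ := hvle y
    have hvyc : ‖v y‖ ≤ c := by
      calc ‖v y‖ ≤ c * ‖y‖ := hvy
        _ ≤ c * 1 := by
            apply mul_le_mul_of_nonneg_left (le_trans hy hε1) hc_nn
        _ = c := mul_one c
    have hT := taylor2_bound f hf x (v y) K ?_
    · calc |Φ y - G y|
          = |f (x + v y) - f x - fderiv ℝ f x (v y) - (1/2) * A (v y) (v y)| := rfl
        _ ≤ K * ‖v y‖ ^ 3 := hT
        _ ≤ K * (c * ‖y‖) ^ 3 := by
            apply mul_le_mul_of_nonneg_left _ hK_nn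
            exact pow_le_pow_left₀ (norm_nonneg _) hvy 3
        _ = K * c ^ 3 * ‖y‖ ^ 3 := by ring
    · intro t ht
      refine le_trans (hD3 _) ?_
      rw [hK_def]
      apply mul_le_mul_of_nonneg_left _ hM
      have hz : ‖x + t • v y‖ ≤ ‖x‖ + c := by
        calc ‖x + t • v y‖ ≤ ‖x‖ + ‖t • v y‖ := norm_add_le _ _
          _ ≤ ‖x‖ + ‖v y‖ := by
              rw [norm_smul, Real.norm_eq_abs]
              have : |t| ≤ 1 := by rw [abs_of_nonneg ht.1]; exact ht.2
              nlinarith [norm_nonneg (v y)]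
          _ ≤ ‖x‖ + c := by linarith
      have := pow_le_pow_left₀ (norm_nonneg _) hz p
      linarith
  -- integrability of Φ and G
  have hAnorm : ∀ w : Fin N → ℝ, |A w w| ≤ ‖A‖ * ‖w‖ ^ 2 := by
    intro w
    calc |A w w| = ‖A w w‖ := (Real.norm_eq_abs _).symm
      _ ≤ ‖A w‖ * ‖w‖ := ContinuousLinearMap.le_opNorm _ w
      _ ≤ ‖A‖ * ‖w‖ * ‖w‖ :=
          mul_le_mul_of_nonneg_right (ContinuousLinearMap.le_opNorm _ w) (norm_nonneg w)
      _ = ‖A‖ * ‖w‖ ^ 2 := by ring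
  have hGbound : ∀ y ∈ S, |G y| ≤ ‖A‖ * c ^ 2 * ‖y‖ ^ 2 := by
    intro y hy
    have h1 : |G y| ≤ (1/2) * (‖A‖ * ‖v y‖ ^ 2) := by
      rw [hG_def]
      rw [abs_mul, abs_of_nonneg (by norm_num : (0:ℝ) ≤ 1/2)]
      exact mul_le_mul_of_nonneg_left (hAnorm (v y)) (by norm_num)
    have h2 : ‖v y‖ ^ 2 ≤ (c * ‖y‖) ^ 2 := pow_le_pow_left₀ (norm_nonneg _) (hvle y) 2
    have hAnn : 0 ≤ ‖A‖ := norm_nonneg A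
    nlinarith [sq_nonneg (c * ‖y‖)]
  have hGcont : Continuous G := by
    apply continuous_const.mul
    exact (A.continuous₂.comp (hvcont.prodMk hvcont) : Continuous fun y => A (v y) (v y))
  have hGint : Integrable G μ := by
    refine (hμ2.const_mul (‖A‖ * c ^ 2)).mono' hGcont.aestronglyMeasurable ?_
    filter_upwards [hmemS] with y hy
    rw [Real.norm_eq_abs]
    exact hGbound y hy
  have hΦcont : Continuous Φ := by
    refine ((hf.continuous.comp (continuous_const.add hvcont)).sub continuous_const).sub ?_
    exact (fderiv ℝ f x).continuous.comp hvcont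
  have hΦint : Integrable Φ μ := by
    refine (hμ2.const_mul (K * c ^ 3 + ‖A‖ * c ^ 2)).mono' hΦcont.aestronglyMeasurable ?_
    filter_upwards [hmemS] with y hy
    rw [Real.norm_eq_abs]
    have h1 : |Φ y| ≤ |Φ y - G y| + |G y| := by
      have := abs_add_le (Φ y - G y) (G y)
      simpa using this
    have h2 : |Φ y - G y| ≤ K * c ^ 3 * ‖y‖ ^ 3 := hptw y hy
    have h3 : |G y| ≤ ‖A‖ * c ^ 2 * ‖y‖ ^ 2 := hGbound y hy
    have h4 : ‖y‖ ^ 3 ≤ ‖y‖ ^ 2 :=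
      pow_le_pow_of_le_one (norm_nonneg y) (le_trans hy hε1) (by norm_num)
    have h5 : K * c ^ 3 * ‖y‖ ^ 3 ≤ K * c ^ 3 * ‖y‖ ^ 2 :=
      mul_le_mul_of_nonneg_left h4 (by positivity)
    calc |Φ y| ≤ K * c ^ 3 * ‖y‖ ^ 2 + ‖A‖ * c ^ 2 * ‖y‖ ^ 2 := by linarith
      _ = (K * c ^ 3 + ‖A‖ * c ^ 2) * ‖y‖ ^ 2 := by ring
  -- integrability of products v y k * v y l
  have hvint : ∀ k l : Fin N, Integrable (fun y => v y k * v y l) μ := by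
    intro k l
    refine (hμ2.const_mul (c ^ 2)).mono'
      ((((continuous_apply k).comp hvcont).mul
        ((continuous_apply l).comp hvcont)).aestronglyMeasurable) ?_
    filter_upwards with y
    rw [Real.norm_eq_abs, abs_mul]
    have h1 : |v y k| ≤ ‖v y‖ := by simpa [Real.norm_eq_abs] using norm_le_pi_norm (v y) k
    have h2 : |v y l| ≤ ‖v y‖ := by simpa [Real.norm_eq_abs] using norm_le_pi_norm (v y) l
    have h3 : ‖v y‖ ≤ c * ‖y‖ := hvle y
    calc |v y k| * |v y l| ≤ ‖v y‖ * ‖v y‖ :=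
          mul_le_mul h1 h2 (abs_nonneg _) (norm_nonneg _)
      _ ≤ (c * ‖y‖) * (c * ‖y‖) := by
          apply mul_le_mul h3 h3 (norm_nonneg _) (by positivity)
      _ = c ^ 2 * ‖y‖ ^ 2 := by ring
  -- moment identity
  have hmom : ∀ k l : Fin N, ∫ y, v y k * v y l ∂μ
      = (h x * (Matrix.of fun i j : Fin d => ∫ y, y i * y j ∂μ) * (h x).transpose) k l := by
    intro k l
    have expand : ∀ y : Fin d → ℝ,
        v y k * v y l = ∑ i, ∑ j, h x k i * h x l j * (y i * y j) := by
      intro y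
      have : v y k * v y l = (∑ i, h x k i * y i) * (∑ j, h x l j * y j) := by
        simp [hv_def, Matrix.mulVec, dotProduct]
      rw [this, Finset.sum_mul_sum]
      refine Finset.sum_congr rfl fun i _ => Finset.sum_congr rfl fun j _ => by ring
    calc ∫ y, v y k * v y l ∂μ
        = ∫ y, ∑ i, ∑ j, h x k i * h x l j * (y i * y j) ∂μ := by
          refine integral_congr_ae ?_
          filter_upwards with y using expand y
      _ = ∑ i, ∑ j, h x k i * h x l j * ∫ y, y i * y j ∂μ := by
          rw [integral_finset_sum _ fun i _ =>
            integrable_finset_sum _ fun j _ => (hij i j).const_mul _]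
          refine Finset.sum_congr rfl fun i _ => ?_
          rw [integral_finset_sum _ fun j _ => (hij i j).const_mul _]
          exact Finset.sum_congr rfl fun j _ => integral_const_mul _ _
      _ = (h x * (Matrix.of fun i j : Fin d => ∫ y, y i * y j ∂μ) * (h x).transpose) k l := by
          rw [Matrix.mul_apply]
          rw [Finset.sum_comm]
          refine Finset.sum_congr rfl fun j _ => ?_
          rw [Matrix.mul_apply, Finset.sum_mul]
          refine Finset.sum_congr rfl fun i _ => ?_
          simp [Matrix.transpose_apply, Matrix.of_apply]
          ring
  -- integral of G equals the quadratic-form sum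
  have hGeq : ∫ y, G y ∂μ
      = (1/2) * ∑ k, ∑ l, A (Pi.single k 1) (Pi.single l 1)
          * (h x * (Matrix.of fun i j : Fin d => ∫ y, y i * y j ∂μ) * (h x).transpose) k l := by
    calc ∫ y, G y ∂μ = (1/2) * ∫ y, A (v y) (v y) ∂μ := integral_const_mul _ _
      _ = (1/2) * ∫ y, ∑ k, ∑ l, (v y k * v y l) * A (Pi.single k 1) (Pi.single l 1) ∂μ := by
          congr 1
          exact integral_congr_ae (Filter.Eventually.of_forall fun y => hA_expand (v y))
      _ = (1/2) * ∑ k, ∑ l, A (Pi.single k 1) (Pi.single l 1)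
            * (h x * (Matrix.of fun i j : Fin d => ∫ y, y i * y j ∂μ) * (h x).transpose) k l := by
          congr 1
          rw [integral_finset_sum _ fun k _ =>
            integrable_finset_sum _ fun l _ => (hvint k l).mul_const _]
          refine Finset.sum_congr rfl fun k _ => ?_
          rw [integral_finset_sum _ fun l _ => (hvint k l).mul_const _]
          refine Finset.sum_congr rfl fun l _ => ?_
          rw [integral_mul_const, hmom k l]
          ring
  -- final bound
  have habs : |∫ y, Φ y ∂μ - ∫ y, G y ∂μ| ≤ (K * c ^ 3) * ∫ y, ‖y‖ ^ 3 ∂μ := by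
    rw [← integral_sub hΦint hGint]
    calc |∫ y, Φ y - G y ∂μ| ≤ ∫ y, |Φ y - G y| ∂μ := by
          simpa [Real.norm_eq_abs] using norm_integral_le_integral_norm (fun y => Φ y - G y) (μ := μ)
      _ ≤ ∫ y, (K * c ^ 3) * ‖y‖ ^ 3 ∂μ := by
          refine integral_mono_ae ((hΦint.sub hGint).abs) (hy3.const_mul _) ?_
          filter_upwards [hmemS] with y hy
          simpa [mul_assoc] using hptw y hy
      _ = (K * c ^ 3) * ∫ y, ‖y‖ ^ 3 ∂μ := integral_const_mul _ _
  have hKc : K * c ^ 3 ≤ (2 ^ (p + 4) * (1 + d * Ch) ^ (p + 3)) * M * (1 + ‖x‖ ^ (p + 3)) := by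
    rw [hK_def, hc_def]
    exact const_bound_aux (by positivity) hM (norm_nonneg x) p
  have hy3nn : 0 ≤ ∫ y, ‖y‖ ^ 3 ∂μ :=
    integral_nonneg fun y => by positivity
  simp only [hBkl]
  rw [← hGeq]
  have hL : (∫ y, (f (x + (h x).mulVec y) - f x - fderiv ℝ f x ((h x).mulVec y)) ∂μ)
      = ∫ y, Φ y ∂μ := rfl
  rw [hL]
  exact le_trans habs (mul_le_mul_of_nonneg_right hKc hy3nn)
end
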